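/- Let F be a field of characteristic ≠ 2,3 containing a primitive cube root of unity ρ, and let C be the F-algebra generated by x, y₁, y₂ subject to: x³ = α ∈ F^×, y₁x = ρxy₁, y₂x = ρ²xy₂, y₁y₂ = ρ y₂y₁ + γ·1 for some γ ∈ F (this is the relation arising from a Clifford algebra of a binary cubic form with β-term eliminated; here the scalar terms D₁, D₂ specialize). Then the elements w := x⁻¹y₂y₁ + c₁x + c₂x⁻¹ (for the appropriate scalars c₁, c₂ determined by the defining relation), y₁³, and y₂³ are central in C. -/
import Mathlib


/-- Centrality in the Clifford algebra of a cubic: with `x³ = α`, `y₁x = ρxy₁`,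
`y₂x = ρ²xy₂`, `y₁y₂ = ρy₂y₁ + γ`, there are scalars `c₁, c₂` such that
`w = x⁻¹y₂y₁ + c₁x + c₂x⁻¹`, `y₁³`, and `y₂³` are central (commute with the
generators `x, y₁, y₂`). -/
theorem clifford_cubic_central_elements
    {F A : Type*} [Field F] [Ring A] [Algebra F A]
    (h2 : (2 : F) ≠ 0) (h3 : (3 : F) ≠ 0)
    (ρ : F) (hρ : IsPrimitiveRoot ρ 3)
    (α γ : F) (hα : α ≠ 0)
    (x : Aˣ) (y₁ y₂ : A)
    (hx3 : (x : A) ^ 3 = algebraMap F A α)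
    (h1 : y₁ * (x : A) = ρ • ((x : A) * y₁))
    (h2' : y₂ * (x : A) = ρ ^ 2 • ((x : A) * y₂))
    (h12 : y₁ * y₂ = ρ • (y₂ * y₁) + algebraMap F A γ) :
    ∃ c₁ c₂ : F,
      (((x⁻¹ : Aˣ) : A) * (y₂ * y₁) + c₁ • (x : A) + c₂ • ((x⁻¹ : Aˣ) : A)) * (x : A)
          = (x : A) * (((x⁻¹ : Aˣ) : A) * (y₂ * y₁) + c₁ • (x : A) + c₂ • ((x⁻¹ : Aˣ) : A)) ∧
      (((x⁻¹ : Aˣ) : A) * (y₂ * y₁) + c₁ • (x : A) + c₂ • ((x⁻¹ : Aˣ) : A)) * y₁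
          = y₁ * (((x⁻¹ : Aˣ) : A) * (y₂ * y₁) + c₁ • (x : A) + c₂ • ((x⁻¹ : Aˣ) : A)) ∧
      (((x⁻¹ : Aˣ) : A) * (y₂ * y₁) + c₁ • (x : A) + c₂ • ((x⁻¹ : Aˣ) : A)) * y₂
          = y₂ * (((x⁻¹ : Aˣ) : A) * (y₂ * y₁) + c₁ • (x : A) + c₂ • ((x⁻¹ : Aˣ) : A)) ∧
      (y₁ ^ 3 * (x : A) = (x : A) * y₁ ^ 3 ∧ y₁ ^ 3 * y₁ = y₁ * y₁ ^ 3 ∧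
        y₁ ^ 3 * y₂ = y₂ * y₁ ^ 3) ∧
      (y₂ ^ 3 * (x : A) = (x : A) * y₂ ^ 3 ∧ y₂ ^ 3 * y₁ = y₁ * y₂ ^ 3 ∧
        y₂ ^ 3 * y₂ = y₂ * y₂ ^ 3) := by
  have hρ3 : ρ ^ 3 = 1 := hρ.pow_eq_one
  have hρ1 : ρ ≠ 1 := hρ.ne_one (by norm_num)
  have hρ1' : ρ - 1 ≠ 0 := sub_ne_zero.mpr hρ1
  have hsum : ρ ^ 2 + ρ + 1 = 0 := by
    rcases mul_eq_zero.mp (show (ρ - 1) * (ρ ^ 2 + ρ + 1) = 0 by linear_combination hρ3) with h | h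
    · exact absurd h hρ1'
    · exact h
  set X : A := (x : A) with hX
  set Xi : A := ((x⁻¹ : Aˣ) : A) with hXi
  have hXXi : X * Xi = 1 := x.mul_inv
  have hXiX : Xi * X = 1 := x.inv_mul
  have hXiX' : ∀ t : A, Xi * (X * t) = t := fun t => by rw [← mul_assoc, hXiX, one_mul]
  have hXXi' : ∀ t : A, X * (Xi * t) = t := fun t => by rw [← mul_assoc, hXXi, one_mul]
  have h12' : y₁ * y₂ = ρ • (y₂ * y₁) + γ • (1 : A) := by
    rw [h12, Algebra.algebraMap_eq_smul_one]
  have k1 : ∀ t : A, y₁ * (X * t) = ρ • (X * (y₁ * t)) := fun t => by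
    rw [← mul_assoc, h1, smul_mul_assoc, mul_assoc]
  have k2 : ∀ t : A, y₂ * (X * t) = ρ ^ 2 • (X * (y₂ * t)) := fun t => by
    rw [← mul_assoc, h2', smul_mul_assoc, mul_assoc]
  have k12 : ∀ t : A, y₁ * (y₂ * t) = ρ • (y₂ * (y₁ * t)) + γ • t := fun t => by
    rw [← mul_assoc, h12', add_mul, smul_mul_assoc, smul_mul_assoc, one_mul, mul_assoc]
  have h21 : y₂ * y₁ = ρ ^ 2 • (y₁ * y₂) - (ρ ^ 2 * γ) • (1 : A) := by
    rw [h12', smul_add, smul_smul, show ρ ^ 2 * ρ = 1 by linear_combination hρ3, one_smul,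
      smul_smul]
    abel
  have k21 : ∀ t : A, y₂ * (y₁ * t) = ρ ^ 2 • (y₁ * (y₂ * t)) - (ρ ^ 2 * γ) • t := fun t => by
    rw [← mul_assoc, h21, sub_mul, smul_mul_assoc, smul_mul_assoc, one_mul, mul_assoc]
  have hL2 : Xi * y₁ = ρ • (y₁ * Xi) := by
    calc Xi * y₁ = Xi * (y₁ * (X * Xi)) := by rw [hXXi, mul_one]
    _ = Xi * ((y₁ * X) * Xi) := by rw [mul_assoc]
    _ = Xi * ((ρ • (X * y₁)) * Xi) := by rw [h1]
    _ = ρ • (Xi * (X * (y₁ * Xi))) := by rw [smul_mul_assoc, mul_smul_comm, mul_assoc]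
    _ = ρ • (y₁ * Xi) := by rw [hXiX']
  have hL3 : Xi * y₂ = ρ ^ 2 • (y₂ * Xi) := by
    calc Xi * y₂ = Xi * (y₂ * (X * Xi)) := by rw [hXXi, mul_one]
    _ = Xi * ((y₂ * X) * Xi) := by rw [mul_assoc]
    _ = Xi * ((ρ ^ 2 • (X * y₂)) * Xi) := by rw [h2']
    _ = ρ ^ 2 • (Xi * (X * (y₂ * Xi))) := by rw [smul_mul_assoc, mul_smul_comm, mul_assoc]
    _ = ρ ^ 2 • (y₂ * Xi) := by rw [hXiX']
  have hL2' : y₁ * Xi = ρ ^ 2 • (Xi * y₁) := by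
    rw [hL2, smul_smul, show ρ ^ 2 * ρ = 1 by linear_combination hρ3, one_smul]
  have hL3' : y₂ * Xi = ρ • (Xi * y₂) := by
    rw [hL3, smul_smul, show ρ * ρ ^ 2 = 1 by linear_combination hρ3, one_smul]
  have kL2 : ∀ t : A, y₁ * (Xi * t) = ρ ^ 2 • (Xi * (y₁ * t)) := fun t => by
    rw [← mul_assoc, hL2', smul_mul_assoc, mul_assoc]
  have kL3 : ∀ t : A, y₂ * (Xi * t) = ρ • (Xi * (y₂ * t)) := fun t => by
    rw [← mul_assoc, hL3', smul_mul_assoc, mul_assoc]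
  have kc : y₂ * (y₁ * X) = X * (y₂ * y₁) := by
    rw [h1, mul_smul_comm, k2, smul_smul, show ρ * ρ ^ 2 = 1 by linear_combination hρ3, one_smul]
  refine ⟨0, γ / (ρ - 1), ?_, ?_, ?_, ⟨?_, ?_, ?_⟩, ⟨?_, ?_, ?_⟩⟩
  · simp only [zero_smul, add_zero, add_mul, mul_add, smul_mul_assoc, mul_smul_comm, mul_assoc,
      kc, hXiX', hXXi', hXiX, hXXi]
  · simp only [zero_smul, add_zero, add_mul, mul_add, smul_mul_assoc, mul_smul_comm, mul_assoc,
      kL2, k12, hL2', smul_add, smul_smul]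
    match_scalars
    · linear_combination (1-ρ)*hsum
    · field_simp
      linear_combination (-γ*(ρ-1))*hsum
  · simp only [zero_smul, add_zero, add_mul, mul_add, smul_mul_assoc, mul_smul_comm, mul_assoc,
      kL3, hL3', h12', smul_add, smul_smul, mul_one]
    match_scalars
    · ring
    · field_simp
      ring
  · simp only [pow_succ, pow_zero, one_mul, pow_one, mul_assoc]
    simp only [h1, k1, mul_smul_comm, smul_smul]
    match_scalars
    linear_combination (ρ-1)*hsum
  · rw [← pow_succ, ← pow_succ']
  · simp only [pow_succ, pow_zero, one_mul, pow_one, mul_assoc]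
    simp only [h12', k12, mul_add, mul_smul_comm, smul_add, smul_smul, mul_one]
    match_scalars
    · linear_combination (ρ-1)*hsum
    · linear_combination γ*hsum
  · simp only [pow_succ, pow_zero, one_mul, pow_one, mul_assoc]
    simp only [h2', k2, mul_smul_comm, smul_smul]
    match_scalars
    linear_combination ((ρ-1)*(ρ^3+1))*hsum
  · simp only [pow_succ, pow_zero, one_mul, pow_one, mul_assoc]
    simp only [h21, k21, mul_sub, mul_smul_comm, smul_sub, smul_smul, mul_one]
    match_scalars
    · linear_combination ((ρ-1)*(ρ^3+1))*hsum
    · linear_combination (-(ρ^2)*γ*(ρ^2-ρ+1))*hsum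
  · rw [← pow_succ, ← pow_succ']
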